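/- If q_n^m satisfies the linear discrete heat equation (q_n^{m+1} - q_n^m)/σ = (q_{n+1}^m - 2cos κ·q_n^m + q_{n-1}^m)/κ² with all q_n^m > 0, then u_n^m = q_{n+1}^m/q_n^m satisfies the discrete Burgers equation u_n^{m+1}/u_n^m = (1 + (σ/κ²)(u_{n+1}^m - 2cos κ + 1/u_n^m)) / (1 + (σ/κ²)(u_n^m - 2cos κ + 1/u_{n-1}^m)). -/

import Mathlib

lemma aux_div {a b A B : ℝ} (ha : a ≠ 0) (hb : b ≠ 0) (hB : B ≠ 0) :
    (a * A) / (b * B) / (a / b) = A / B := by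
  field_simp

/-- Discrete Cole-Hopf transformation: if `q_n^m` satisfies the linear
discrete heat equation, then `u_n^m = q_{n+1}^m/q_n^m` satisfies the discrete
Burgers equation. -/
theorem discrete_cole_hopf_burgers
    (σ κ : ℝ) (hσ : σ ≠ 0) (hκ : κ ≠ 0)
    (q : ℤ → ℤ → ℝ) (hq : ∀ n m, 0 < q n m)
    (hheat : ∀ n m : ℤ, (q n (m + 1) - q n m) / σ
        = (q (n + 1) m - 2 * Real.cos κ * q n m + q (n - 1) m) / κ ^ 2)
    (u : ℤ → ℤ → ℝ) (hu : ∀ n m : ℤ, u n m = q (n + 1) m / q n m)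
    (hden : ∀ n m : ℤ,
      1 + σ / κ ^ 2 * (u n m - 2 * Real.cos κ + 1 / u (n - 1) m) ≠ 0) :
    ∀ n m : ℤ, u n (m + 1) / u n m
      = (1 + σ / κ ^ 2 * (u (n + 1) m - 2 * Real.cos κ + 1 / u n m))
        / (1 + σ / κ ^ 2 * (u n m - 2 * Real.cos κ + 1 / u (n - 1) m)) := by
  intro n m
  have hκ2 : (κ:ℝ) ^ 2 ≠ 0 := pow_ne_zero 2 hκ
  have key : ∀ k : ℤ, q k (m + 1)
      = q k m * (1 + σ / κ ^ 2 * (u k m - 2 * Real.cos κ + 1 / u (k - 1) m)) := by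
    intro k
    have h := hheat k m
    have h1 : u k m = q (k + 1) m / q k m := hu k m
    have h2 : u (k - 1) m = q k m / q (k - 1) m := by
      have := hu (k - 1) m; simpa using this
    have hk := (hq k m).ne'
    have hk1 := (hq (k - 1) m).ne'
    rw [h1, h2]
    field_simp at h ⊢
    linear_combination h
  have e1 := key n
  have e2 := key (n + 1)
  have hs : (n : ℤ) + 1 - 1 = n := by ring
  rw [hs] at e2
  rw [hu n (m + 1), e1, e2, hu n m]
  have hd := hden n m
  rw [hu n m] at hd
  exact aux_div (hq (n + 1) m).ne' (hq n m).ne' hd
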